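/- Define α_{k₁,k₂}^{m₁,m₂} = (-1)^{k₂-m₂}(h/2)^{k₁+k₂-m₁-m₂} D_{k₁,k₂}^{m₁,m₂}(b_{k₁,k₂}^{m₁,m₂} - b_{k₁-1,k₂-1}^{m₁,m₂}) with D_{k₁,k₂}^{m₁,m₂} = [ (j₁-m₁)!(j₁+k₁)!(j₂-m₂)!(j₂+k₂)! / ((j₁+m₁)!(j₁-k₁)!(j₂+m₂)!(j₂-k₂)!) ]^{1/2} and b_{k₁,k₂}^{m₁,m₂} = C(m₁+k₁, k₂-m₂)·C(m₂+k₂, k₁-m₁). Then the orthogonality relation Σ_{k₁,k₂} α_{k₁,k₂}^{m₁,m₂} α_{-k₁,-k₂}^{-n₁,-n₂} = δ_{m₁,n₁} δ_{m₂,n₂} holds. -/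

import Mathlib

open Finset

/-- Generalized binomial coefficient `C(z,w) = z(z-1)⋯(z-w+1)/w!` for integer `z`,
vanishing for `w < 0`. -/
noncomputable def gchoose (z w : ℤ) : ℝ :=
  if 0 ≤ w then (∏ i ∈ Finset.range w.toNat, ((z : ℝ) - i)) / (w.toNat).factorial else 0

/-- The factor `D_{k₁,k₂}^{m₁,m₂}`.  Throughout, an index `k ∈ {-j,…,j}` is encoded by the
natural number (given here as an integer) `j + k ∈ {0,…,2j}`, and `J = 2j`; thus `μᵢ = jᵢ+mᵢ`
and `aᵢ = jᵢ+kᵢ`. -/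
noncomputable def Dcoef (J₁ J₂ : ℕ) (μ₁ μ₂ a₁ a₂ : ℤ) : ℝ :=
  Real.sqrt
    ((((J₁ : ℤ) - μ₁).toNat.factorial * a₁.toNat.factorial *
        ((J₂ : ℤ) - μ₂).toNat.factorial * a₂.toNat.factorial : ℝ) /
      (μ₁.toNat.factorial * ((J₁ : ℤ) - a₁).toNat.factorial *
        μ₂.toNat.factorial * ((J₂ : ℤ) - a₂).toNat.factorial : ℝ))

/-- The factor `b_{k₁,k₂}^{m₁,m₂} = C(m₁+k₁, k₂-m₂)·C(m₂+k₂, k₁-m₁)` in the encoded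
variables: `m₁+k₁ = μ₁+a₁-J₁`, `k₂-m₂ = a₂-μ₂`, etc. -/
noncomputable def bcoef (J₁ J₂ : ℕ) (μ₁ μ₂ a₁ a₂ : ℤ) : ℝ :=
  gchoose (μ₁ + a₁ - J₁) (a₂ - μ₂) * gchoose (μ₂ + a₂ - J₂) (a₁ - μ₁)

/-- The coefficient `α_{k₁,k₂}^{m₁,m₂}` of `U_h(sl(2))`, in encoded variables (`μᵢ = jᵢ+mᵢ`,
`aᵢ = jᵢ+kᵢ`, `Jᵢ = 2jᵢ`); it vanishes outside the range `mᵢ ≤ kᵢ ≤ jᵢ`, `mᵢ ≥ -jᵢ`. -/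
noncomputable def alphac (h : ℝ) (J₁ J₂ : ℕ) (μ₁ μ₂ a₁ a₂ : ℤ) : ℝ :=
  if 0 ≤ μ₁ ∧ μ₁ ≤ a₁ ∧ a₁ ≤ J₁ ∧ 0 ≤ μ₂ ∧ μ₂ ≤ a₂ ∧ a₂ ≤ J₂ then
    (-1 : ℝ) ^ (a₂ - μ₂).toNat * (h / 2) ^ (a₁ + a₂ - μ₁ - μ₂).toNat *
      Dcoef J₁ J₂ μ₁ μ₂ a₁ a₂ *
      (bcoef J₁ J₂ μ₁ μ₂ a₁ a₂ - bcoef J₁ J₂ μ₁ μ₂ (a₁ - 1) (a₂ - 1))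
  else 0

lemma gchoose_of_neg {z w : ℤ} (h : w < 0) : gchoose z w = 0 := by
  simp [gchoose, not_le.2 h]

lemma gchoose_zero_right (z : ℤ) : gchoose z 0 = 1 := by simp [gchoose]

lemma gchoose_natCast (z : ℤ) (k : ℕ) :
    gchoose z k = (∏ i ∈ Finset.range k, ((z : ℝ) - i)) / k.factorial := by
  simp [gchoose, Int.toNat_natCast]

lemma gchoose_succ (z : ℤ) (k : ℕ) :
    gchoose z ((k:ℤ)+1) = gchoose z k * ((z : ℝ) - k) / (k+1) := by
  rw [show ((k:ℤ)+1) = ((k+1 : ℕ) : ℤ) by push_cast; ring, gchoose_natCast, gchoose_natCast,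
    Finset.prod_range_succ, Nat.factorial_succ]
  push_cast
  rw [div_mul_eq_mul_div, div_div]
  congr 1
  ring

lemma gchoose_pascal (z w : ℤ) : gchoose (z+1) w = gchoose z w + gchoose z (w-1) := by
  rcases lt_trichotomy w 0 with hw | hw | hw
  · rw [gchoose_of_neg hw, gchoose_of_neg hw, gchoose_of_neg (by omega)]; ring
  · subst hw
    rw [gchoose_zero_right, gchoose_zero_right, gchoose_of_neg (by norm_num)]; ring
  · obtain ⟨k, rfl⟩ : ∃ k : ℕ, w = (k : ℤ) + 1 := ⟨(w-1).toNat, by omega⟩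
    rw [show ((k:ℤ)+1-1) = ((k:ℕ):ℤ) by ring]
    rw [show ((k:ℤ)+1) = ((k+1 : ℕ) : ℤ) by push_cast; ring]
    rw [gchoose_natCast, gchoose_natCast, gchoose_natCast]
    rw [Finset.prod_range_succ', Finset.prod_range_succ]
    have h1 : (k.factorial : ℝ) ≠ 0 := Nat.cast_ne_zero.2 k.factorial_ne_zero
    rw [Nat.factorial_succ]
    push_cast
    field_simp
    ring

lemma gchoose_eq_zero_of_lt {z w : ℤ} (h0 : 0 ≤ z) (h : z < w) : gchoose z w = 0 := by
  have hw : 0 ≤ w := by omega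
  rw [gchoose, if_pos hw]
  rw [Finset.prod_eq_zero (i := z.toNat) (by simp [Finset.mem_range]; omega)
    (by rw [sub_eq_zero]; exact_mod_cast (Int.toNat_of_nonneg h0).symm)]
  simp

lemma gchoose_self (n : ℕ) : gchoose n n = 1 := by
  rw [gchoose_natCast]
  rw [show ∏ i ∈ Finset.range n, (((n:ℤ):ℝ) - i) = ∏ i ∈ Finset.range n, ((n:ℝ) - i) by
    apply Finset.prod_congr rfl; intros; push_cast; ring]
  have : ∏ i ∈ Finset.range n, ((n:ℝ) - i) = n.factorial := by
    induction n with
    | zero => simp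
    | succ m ih =>
      rw [Finset.prod_range_succ', Nat.factorial_succ]
      push_cast
      rw [show ∏ i ∈ Finset.range m, ((m:ℝ) + 1 - (↑i+1)) = ∏ i ∈ Finset.range m, ((m:ℝ) - i) by
        apply Finset.prod_congr rfl; intros; ring]
      rw [ih]; push_cast; ring
  rw [this]
  have h1 : (n.factorial : ℝ) ≠ 0 := Nat.cast_ne_zero.2 n.factorial_ne_zero
  field_simp

lemma gchoose_neg_formula (m k : ℕ) :
    gchoose (-(m:ℤ)-1) k = (-1)^k * ((m+k).factorial / (m.factorial * k.factorial) : ℝ) := by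
  induction k with
  | zero => rw [Nat.cast_zero, gchoose_zero_right]; field_simp; simp
  | succ k ih =>
    rw [show ((k+1:ℕ):ℤ) = (k:ℤ)+1 by push_cast; ring, gchoose_succ, ih]
    have h1 : (k.factorial : ℝ) ≠ 0 := Nat.cast_ne_zero.2 k.factorial_ne_zero
    have h2 : (m.factorial : ℝ) ≠ 0 := Nat.cast_ne_zero.2 m.factorial_ne_zero
    rw [show m + (k+1) = (m+k)+1 from by ring, Nat.factorial_succ, Nat.factorial_succ]
    push_cast
    field_simp
    ring

noncomputable def cc (a b t₁ t₂ : ℤ) : ℝ := gchoose (a + t₁) t₂ * gchoose (b + t₂) t₁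

lemma cc_swap (a b t₁ t₂ : ℤ) : cc a b t₁ t₂ = cc b a t₂ t₁ := by
  rw [cc, cc, mul_comm]

noncomputable def Sc (a b a' b' : ℤ) (q₁ q₂ : ℕ) : ℝ :=
  ∑ t₁ ∈ Finset.range (q₁+1), ∑ t₂ ∈ Finset.range (q₂+1),
    cc a b t₁ t₂ * cc a' b' ((q₁:ℤ) - t₁) ((q₂:ℤ) - t₂)

lemma Sc_swap (a b a' b' : ℤ) (q₁ q₂ : ℕ) : Sc a b a' b' q₁ q₂ = Sc b a b' a' q₂ q₁ := by
  rw [Sc, Sc, Finset.sum_comm]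
  apply Finset.sum_congr rfl; intro t₂ _
  apply Finset.sum_congr rfl; intro t₁ _
  rw [cc_swap, cc_swap a' b']

lemma Sc_base (a b a' b' : ℤ) (q₁ : ℕ) :
    Sc a b a' b' q₁ 0 = ∑ t₁ ∈ Finset.range (q₁+1), gchoose b t₁ * gchoose b' ((q₁:ℤ) - t₁) := by
  rw [Sc]
  apply Finset.sum_congr rfl; intro t₁ _
  rw [Finset.sum_range_one, cc, cc]
  push_cast
  simp only [add_zero, gchoose_zero_right, one_mul, mul_one]

lemma Sc_stepA (a b a' b' : ℤ) (q₁ r : ℕ) :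
    Sc (a+1) b a' b' q₁ (r+1) = Sc a b a' b' q₁ (r+1) + Sc a (b+1) a' b' q₁ r := by
  rw [Sc, Sc, Sc, ← Finset.sum_add_distrib]
  apply Finset.sum_congr rfl; intro t₁ _
  have hcc : ∀ t₂ : ℕ, cc (a+1) b t₁ t₂ = cc a b t₁ t₂
      + gchoose (a+t₁) ((t₂:ℤ)-1) * gchoose (b+t₂) t₁ := by
    intro t₂
    rw [cc, cc, show a+1+(t₁:ℤ) = (a+t₁)+1 by ring, gchoose_pascal]
    ring
  rw [Finset.sum_congr rfl (fun t₂ _ => by rw [hcc t₂]; ring_nf :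
    ∀ t₂ ∈ Finset.range (r+1+1),
      cc (a+1) b t₁ t₂ * cc a' b' ((q₁:ℤ)-t₁) ((↑(r+1):ℤ) - t₂)
      = cc a b t₁ t₂ * cc a' b' ((q₁:ℤ)-t₁) ((↑(r+1):ℤ) - t₂)
      + gchoose (a+t₁) ((t₂:ℤ)-1) * gchoose (b+t₂) t₁ * cc a' b' ((q₁:ℤ)-t₁) ((↑(r+1):ℤ) - t₂))]
  rw [Finset.sum_add_distrib]
  congr 1
  rw [Finset.sum_range_succ']
  simp only [Nat.cast_zero, Nat.cast_add, Nat.cast_one]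
  rw [show gchoose (a+(t₁:ℤ)) ((0:ℤ)-1) = 0 from gchoose_of_neg (by norm_num)]
  rw [zero_mul, zero_mul, add_zero]
  apply Finset.sum_congr rfl; intro s _
  rw [show (s:ℤ)+1-1 = (s:ℤ) by ring,
    show ((r:ℤ)+1) - ((s:ℤ)+1) = (r:ℤ) - s by ring, cc, cc,
    show b+(((s:ℤ))+1) = b+1+(s:ℤ) by ring]

lemma Sc_stepB (a b a' b' : ℤ) (q₁ r : ℕ) :
    Sc a b (a'+1) b' q₁ (r+1) = Sc a b a' b' q₁ (r+1) + Sc a b a' (b'+1) q₁ r := by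
  rw [Sc, Sc, Sc, ← Finset.sum_add_distrib]
  apply Finset.sum_congr rfl; intro t₁ _
  have hcc : ∀ t₂ : ℤ, cc (a'+1) b' ((q₁:ℤ)-t₁) ((↑(r+1):ℤ)-t₂)
      = cc a' b' ((q₁:ℤ)-t₁) ((↑(r+1):ℤ)-t₂)
      + gchoose (a'+((q₁:ℤ)-t₁)) ((↑(r+1):ℤ)-t₂-1) * gchoose (b'+((↑(r+1):ℤ)-t₂)) ((q₁:ℤ)-t₁) := by
    intro t₂
    rw [cc, cc, show a'+1+((q₁:ℤ)-t₁) = (a'+((q₁:ℤ)-t₁))+1 by ring, gchoose_pascal]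
    ring
  rw [Finset.sum_congr rfl (fun t₂ _ => by rw [hcc (t₂:ℤ)]; ring :
    ∀ t₂ ∈ Finset.range (r+1+1),
      cc a b t₁ t₂ * cc (a'+1) b' ((q₁:ℤ)-t₁) ((↑(r+1):ℤ) - t₂)
      = cc a b t₁ t₂ * cc a' b' ((q₁:ℤ)-t₁) ((↑(r+1):ℤ) - t₂)
      + cc a b t₁ t₂ * (gchoose (a'+((q₁:ℤ)-t₁)) ((↑(r+1):ℤ)-t₂-1)
          * gchoose (b'+((↑(r+1):ℤ)-t₂)) ((q₁:ℤ)-t₁)))]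
  rw [Finset.sum_add_distrib]
  congr 1
  rw [Finset.sum_range_succ]
  rw [show ((↑(r+1):ℤ) - (↑(r+1):ℤ) - 1) = -1 by ring]
  rw [gchoose_of_neg (show (-1:ℤ) < 0 by norm_num)]
  rw [zero_mul, mul_zero, add_zero]
  apply Finset.sum_congr rfl; intro s _
  rw [cc, show ((↑(r+1):ℤ)-↑s-1) = (r:ℤ)-↑s by push_cast; ring,
    show b'+((↑(r+1):ℤ)-↑s) = b'+1+((r:ℤ)-↑s) by push_cast; ring, cc]

lemma Sc_key : ∀ (n : ℕ) (q₁ q₂ : ℕ), q₁ + q₂ = n → ∀ a b a' b' : ℤ,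
    Sc (a+1) b a' b' q₁ q₂ = Sc a b (a'+1) b' q₁ q₂ := by
  intro n
  induction n with
  | zero =>
    intro q₁ q₂ hq a b a' b'
    obtain ⟨rfl, rfl⟩ : q₁ = 0 ∧ q₂ = 0 := by omega
    rw [Sc_base, Sc_base]
  | succ m ih =>
    intro q₁ q₂ hq a b a' b'
    cases q₂ with
    | zero => rw [Sc_base, Sc_base]
    | succ r =>
      rw [Sc_stepA, Sc_stepB]
      congr 1
      rw [Sc_swap a (b+1) a' b', Sc_swap a b a' (b'+1)]
      exact ih r q₁ (by omega) b a b' a'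

lemma Sc_shiftA (b b' : ℤ) (q₁ q₂ : ℕ) :
    ∀ a a' : ℤ, Sc a b a' b' q₁ q₂ = Sc 0 b (a'+a) b' q₁ q₂ := by
  intro a
  induction a using Int.induction_on with
  | zero => intro a'; rw [add_zero]
  | succ i ihp =>
    intro a'
    rw [Sc_key (q₁+q₂) q₁ q₂ rfl i b a' b', ihp (a'+1), show a'+1+(i:ℤ) = a'+((i:ℤ)+1) by ring]
  | pred i ihn =>
    intro a'
    have hk := Sc_key (q₁+q₂) q₁ q₂ rfl (-(i:ℤ)-1) b (a'-1) b'
    rw [show -(i:ℤ)-1+1 = -(i:ℤ) by ring, show a'-1+1 = a' by ring] at hk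
    rw [← hk, ihn (a'-1), show a'-1+(-(i:ℤ)) = a'+(-(i:ℤ)-1) by ring]

lemma Sc_shift (a b a' b' : ℤ) (q₁ q₂ : ℕ) :
    Sc a b a' b' q₁ q₂ = Sc 0 0 (a'+a) (b'+b) q₁ q₂ := by
  rw [Sc_shiftA, Sc_swap, Sc_shiftA, Sc_swap]

lemma cc_neg_left {s₁ : ℤ} (h : s₁ < 0) (a b s₂ : ℤ) : cc a b s₁ s₂ = 0 := by
  rw [cc, gchoose_of_neg h, mul_zero]

lemma cc_neg_right {s₂ : ℤ} (h : s₂ < 0) (a b s₁ : ℤ) : cc a b s₁ s₂ = 0 := by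
  rw [cc, gchoose_of_neg h, zero_mul]

noncomputable def dd (a b t₁ t₂ : ℤ) : ℝ := cc a b t₁ t₂ - cc a b (t₁-1) (t₂-1)

noncomputable def Sd (a b a' b' : ℤ) (q₁ q₂ : ℕ) : ℝ :=
  ∑ t₁ ∈ Finset.range (q₁+1), ∑ t₂ ∈ Finset.range (q₂+1),
    dd a b t₁ t₂ * dd a' b' ((q₁:ℤ) - t₁) ((q₂:ℤ) - t₂)

noncomputable def Sc0 (a b a' b' : ℤ) (q₁ q₂ : ℕ) : ℝ :=
  ∑ t₁ ∈ Finset.range q₁, ∑ t₂ ∈ Finset.range q₂,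
    cc a b t₁ t₂ * cc a' b' ((q₁:ℤ) - 1 - t₁) ((q₂:ℤ) - 1 - t₂)

lemma Sc0_succ (a b a' b' : ℤ) (q₁ q₂ : ℕ) :
    Sc0 a b a' b' (q₁+1) (q₂+1) = Sc a b a' b' q₁ q₂ := by
  rw [Sc0, Sc]
  apply Finset.sum_congr rfl; intro t₁ _
  apply Finset.sum_congr rfl; intro t₂ _
  rw [show ((↑(q₁+1):ℤ) - 1 - t₁) = (q₁:ℤ) - t₁ by push_cast; ring,
    show ((↑(q₂+1):ℤ) - 1 - t₂) = (q₂:ℤ) - t₂ by push_cast; ring]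

lemma Sc0_zero_left (a b a' b' : ℤ) (q₂ : ℕ) : Sc0 a b a' b' 0 q₂ = 0 := by
  rw [Sc0]; simp

lemma Sc0_zero_right (a b a' b' : ℤ) (q₁ : ℕ) : Sc0 a b a' b' q₁ 0 = 0 := by
  rw [Sc0]; simp

lemma Sc0_shift (a b a' b' : ℤ) (q₁ q₂ : ℕ) :
    Sc0 a b a' b' q₁ q₂ = Sc0 0 0 (a'+a) (b'+b) q₁ q₂ := by
  cases q₁ with
  | zero => rw [Sc0_zero_left, Sc0_zero_left]
  | succ u =>
    cases q₂ with
    | zero => rw [Sc0_zero_right, Sc0_zero_right]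
    | succ v => rw [Sc0_succ, Sc0_succ, Sc_shift]

lemma cc_negone_left (a b s₂ : ℤ) : cc a b (-1) s₂ = 0 := cc_neg_left (by omega) a b s₂
lemma cc_negone_right (a b s₁ : ℤ) : cc a b s₁ (-1) = 0 := cc_neg_right (by omega) a b s₁
lemma cc_diag_left (a b q s₂ : ℤ) : cc a b (q - q - 1) s₂ = 0 :=
  cc_neg_left (by omega) a b s₂
lemma cc_diag_right (a b q s₁ : ℤ) : cc a b s₁ (q - q - 1) = 0 :=
  cc_neg_right (by omega) a b s₁

lemma Sd_decomp (a b a' b' : ℤ) (q₁ q₂ : ℕ) :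
    Sd a b a' b' q₁ q₂ = Sc0 a b a' b' (q₁+1) (q₂+1) - 2 * Sc0 a b a' b' q₁ q₂
      + Sc0 a b a' b' (q₁-1) (q₂-1) := by
  have expand : Sd a b a' b' q₁ q₂ =
      (∑ t₁ ∈ Finset.range (q₁+1), ∑ t₂ ∈ Finset.range (q₂+1),
        cc a b t₁ t₂ * cc a' b' ((q₁:ℤ)-t₁) ((q₂:ℤ)-t₂))
      - (∑ t₁ ∈ Finset.range (q₁+1), ∑ t₂ ∈ Finset.range (q₂+1),
        cc a b t₁ t₂ * cc a' b' ((q₁:ℤ)-t₁-1) ((q₂:ℤ)-t₂-1))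
      - (∑ t₁ ∈ Finset.range (q₁+1), ∑ t₂ ∈ Finset.range (q₂+1),
        cc a b ((t₁:ℤ)-1) ((t₂:ℤ)-1) * cc a' b' ((q₁:ℤ)-t₁) ((q₂:ℤ)-t₂))
      + (∑ t₁ ∈ Finset.range (q₁+1), ∑ t₂ ∈ Finset.range (q₂+1),
        cc a b ((t₁:ℤ)-1) ((t₂:ℤ)-1) * cc a' b' ((q₁:ℤ)-t₁-1) ((q₂:ℤ)-t₂-1)) := by
    rw [Sd]
    rw [← Finset.sum_sub_distrib, ← Finset.sum_sub_distrib, ← Finset.sum_add_distrib]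
    apply Finset.sum_congr rfl; intro t₁ _
    rw [← Finset.sum_sub_distrib, ← Finset.sum_sub_distrib, ← Finset.sum_add_distrib]
    apply Finset.sum_congr rfl; intro t₂ _
    rw [dd, dd]
    ring
  have TA : (∑ t₁ ∈ Finset.range (q₁+1), ∑ t₂ ∈ Finset.range (q₂+1),
      cc a b t₁ t₂ * cc a' b' ((q₁:ℤ)-t₁) ((q₂:ℤ)-t₂)) = Sc0 a b a' b' (q₁+1) (q₂+1) := by
    rw [Sc0_succ, Sc]
  have TB : (∑ t₁ ∈ Finset.range (q₁+1), ∑ t₂ ∈ Finset.range (q₂+1),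
      cc a b t₁ t₂ * cc a' b' ((q₁:ℤ)-t₁-1) ((q₂:ℤ)-t₂-1)) = Sc0 a b a' b' q₁ q₂ := by
    rw [Finset.sum_range_succ]
    simp only [cc_diag_left, mul_zero, Finset.sum_const_zero, add_zero]
    rw [Sc0]
    refine Finset.sum_congr rfl fun t₁ _ => ?_
    rw [Finset.sum_range_succ]
    simp only [cc_diag_right, mul_zero, add_zero]
    refine Finset.sum_congr rfl fun t₂ _ => ?_
    rw [show (q₁:ℤ)-t₁-1 = (q₁:ℤ)-1-t₁ by ring, show (q₂:ℤ)-t₂-1 = (q₂:ℤ)-1-t₂ by ring]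
  have TC : (∑ t₁ ∈ Finset.range (q₁+1), ∑ t₂ ∈ Finset.range (q₂+1),
      cc a b ((t₁:ℤ)-1) ((t₂:ℤ)-1) * cc a' b' ((q₁:ℤ)-t₁) ((q₂:ℤ)-t₂)) = Sc0 a b a' b' q₁ q₂ := by
    rw [Finset.sum_range_succ']
    simp only [Nat.cast_zero, zero_sub, cc_negone_left, zero_mul, Finset.sum_const_zero, add_zero]
    rw [Sc0]
    refine Finset.sum_congr rfl fun t₁ _ => ?_
    rw [Finset.sum_range_succ']
    simp only [Nat.cast_zero, zero_sub, cc_negone_right, zero_mul, add_zero]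
    refine Finset.sum_congr rfl fun t₂ _ => ?_
    rw [show (↑(t₁+1):ℤ)-1 = (t₁:ℤ) by push_cast; ring,
      show (↑(t₂+1):ℤ)-1 = (t₂:ℤ) by push_cast; ring,
      show (q₁:ℤ)-(↑(t₁+1):ℤ) = (q₁:ℤ)-1-t₁ by push_cast; ring,
      show (q₂:ℤ)-(↑(t₂+1):ℤ) = (q₂:ℤ)-1-t₂ by push_cast; ring]
  have TD : (∑ t₁ ∈ Finset.range (q₁+1), ∑ t₂ ∈ Finset.range (q₂+1),
      cc a b ((t₁:ℤ)-1) ((t₂:ℤ)-1) * cc a' b' ((q₁:ℤ)-t₁-1) ((q₂:ℤ)-t₂-1))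
      = Sc0 a b a' b' (q₁-1) (q₂-1) := by
    cases q₁ with
    | zero =>
      rw [Sc0_zero_left]
      refine Finset.sum_eq_zero fun t₁ ht₁ => Finset.sum_eq_zero fun t₂ _ => ?_
      have : t₁ = 0 := by simpa using ht₁
      subst this
      simp only [Nat.cast_zero, zero_sub, cc_negone_left, zero_mul]
    | succ u =>
      cases q₂ with
      | zero =>
        rw [Sc0_zero_right]
        refine Finset.sum_eq_zero fun t₁ _ => Finset.sum_eq_zero fun t₂ ht₂ => ?_
        have : t₂ = 0 := by simpa using ht₂
        subst this
        simp only [Nat.cast_zero, zero_sub, cc_negone_right, zero_mul]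
      | succ v =>
        rw [show u+1-1 = u from rfl, show v+1-1 = v from rfl]
        rw [Finset.sum_range_succ']
        simp only [Nat.cast_zero, zero_sub, cc_negone_left, zero_mul, Finset.sum_const_zero,
          add_zero]
        rw [Finset.sum_range_succ]
        simp only [show ((↑(u+1):ℤ) - (↑(u+1):ℤ) - 1) = -1 by ring, cc_negone_left, mul_zero,
          Finset.sum_const_zero, add_zero]
        rw [Sc0]
        refine Finset.sum_congr rfl fun t₁ _ => ?_
        rw [Finset.sum_range_succ']
        simp only [Nat.cast_zero, zero_sub, cc_negone_right, zero_mul, add_zero]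
        rw [Finset.sum_range_succ]
        simp only [show ((↑(v+1):ℤ) - (↑(v+1):ℤ) - 1) = -1 by ring, cc_negone_right, mul_zero,
          add_zero]
        refine Finset.sum_congr rfl fun t₂ _ => ?_
        rw [show (↑(t₁+1):ℤ)-1 = (t₁:ℤ) by push_cast; ring,
          show (↑(t₂+1):ℤ)-1 = (t₂:ℤ) by push_cast; ring,
          show (↑(u+1):ℤ)-(↑(t₁+1):ℤ)-1 = (u:ℤ)-1-t₁ by push_cast; ring,
          show (↑(v+1):ℤ)-(↑(t₂+1):ℤ)-1 = (v:ℤ)-1-t₂ by push_cast; ring]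
  rw [expand, TA, TB, TC, TD]
  ring

lemma Sd_shift (a b a' b' : ℤ) (q₁ q₂ : ℕ) :
    Sd a b a' b' q₁ q₂ = Sd 0 0 (a'+a) (b'+b) q₁ q₂ := by
  rw [Sd_decomp, Sd_decomp, Sc0_shift, Sc0_shift a b a' b' q₁ q₂,
    Sc0_shift a b a' b' (q₁-1) (q₂-1)]

lemma dd00 (t₁ t₂ : ℕ) : dd 0 0 (t₁:ℤ) (t₂:ℤ) = if t₁ = 0 ∧ t₂ = 0 then 1 else 0 := by
  rw [dd, cc, cc]
  simp only [zero_add]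
  rcases Nat.lt_trichotomy t₁ t₂ with hlt | heq | hgt
  · rw [gchoose_eq_zero_of_lt (by omega) (by exact_mod_cast hlt), zero_mul]
    rw [if_neg (by omega)]
    rcases Nat.eq_zero_or_pos t₁ with h0 | h1
    · subst h0
      rw [gchoose_of_neg (show ((0:ℕ):ℤ)-1 < 0 by omega), mul_zero]
      ring
    · rw [gchoose_eq_zero_of_lt (by omega) (by omega), zero_mul]
      ring
  · subst heq
    rcases Nat.eq_zero_or_pos t₁ with h0 | h1
    · subst h0
      rw [if_pos ⟨rfl, rfl⟩]
      norm_num [gchoose_zero_right, gchoose_of_neg (show (-1:ℤ) < 0 by norm_num)]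
    · rw [if_neg (by omega)]
      obtain ⟨s, rfl⟩ : ∃ s, t₁ = s + 1 := ⟨t₁ - 1, by omega⟩
      rw [gchoose_self, show ((↑(s+1):ℤ))-1 = ((s:ℕ):ℤ) by push_cast; ring, gchoose_self]
      ring
  · rw [gchoose_eq_zero_of_lt (show (0:ℤ) ≤ t₂ by omega) (by exact_mod_cast hgt), mul_zero]
    rw [if_neg (by omega)]
    rcases Nat.eq_zero_or_pos t₂ with h0 | h1
    · subst h0
      rw [gchoose_of_neg (show ((0:ℕ):ℤ)-1 < 0 by omega), zero_mul]
      ring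
    · rw [gchoose_eq_zero_of_lt (show (0:ℤ) ≤ (t₂:ℤ)-1 by omega) (by omega), mul_zero]
      ring

lemma Sd_eval (u v : ℤ) (q₁ q₂ : ℕ) : Sd 0 0 u v q₁ q₂ = dd u v q₁ q₂ := by
  rw [Sd]
  rw [Finset.sum_eq_single 0 (fun t₁ _ ht₁ => Finset.sum_eq_zero (fun t₂ _ => by
      rw [dd00, if_neg (by omega), zero_mul]))
    (fun h => absurd (Finset.mem_range.2 (by omega)) h)]
  rw [Finset.sum_eq_single 0 (fun t₂ _ ht₂ => by
      rw [dd00, if_neg (by omega), zero_mul])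
    (fun h => absurd (Finset.mem_range.2 (by omega)) h)]
  rw [dd00, if_pos ⟨rfl, rfl⟩, one_mul]
  norm_num

lemma dd_final (n₁ n₂ : ℕ) :
    dd (-2*(n₁:ℤ)) (-2*(n₂:ℤ)) n₁ n₂ = if n₁ = 0 ∧ n₂ = 0 then 1 else 0 := by
  rw [dd, cc, cc]
  rw [show -2*(n₁:ℤ)+n₁ = -(n₁:ℤ) by ring, show -2*(n₂:ℤ)+n₂ = -(n₂:ℤ) by ring,
    show -2*(n₁:ℤ)+((n₁:ℤ)-1) = -(n₁:ℤ)-1 by ring,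
    show -2*(n₂:ℤ)+((n₂:ℤ)-1) = -(n₂:ℤ)-1 by ring]
  cases n₁ with
  | zero =>
    cases n₂ with
    | zero =>
      rw [if_pos ⟨rfl, rfl⟩]
      norm_num [gchoose_zero_right, gchoose_of_neg (show (-1:ℤ) < 0 by norm_num)]
    | succ m₂ =>
      rw [if_neg (by omega)]
      rw [show -((0:ℕ):ℤ) = 0 by norm_num]
      rw [gchoose_eq_zero_of_lt (le_refl 0) (by exact_mod_cast Nat.succ_pos m₂), zero_mul]
      rw [gchoose_of_neg (show ((0:ℕ):ℤ)-1 < 0 by omega), mul_zero]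
      ring
  | succ m₁ =>
    cases n₂ with
    | zero =>
      rw [if_neg (by omega)]
      rw [show -((0:ℕ):ℤ) = 0 by norm_num]
      rw [gchoose_eq_zero_of_lt (le_refl 0) (by exact_mod_cast Nat.succ_pos m₁), mul_zero]
      rw [gchoose_of_neg (show ((0:ℕ):ℤ)-1 < 0 by omega), zero_mul]
      ring
    | succ m₂ =>
      rw [if_neg (by omega)]
      rw [show -(↑(m₁+1):ℤ) = -(m₁:ℤ)-1 by push_cast; ring,
        show -(↑(m₂+1):ℤ) = -(m₂:ℤ)-1 by push_cast; ring]
      rw [show -((m₁:ℤ))-1-1 = -(↑(m₁+1):ℤ)-1 by push_cast; ring,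
        show -((m₂:ℤ))-1-1 = -(↑(m₂+1):ℤ)-1 by push_cast; ring,
        show (↑(m₂+1):ℤ)-1 = ((m₂:ℕ):ℤ) by push_cast; ring,
        show (↑(m₁+1):ℤ)-1 = ((m₁:ℕ):ℤ) by push_cast; ring]
      rw [gchoose_neg_formula m₁ (m₂+1), gchoose_neg_formula m₂ (m₁+1),
        gchoose_neg_formula (m₁+1) m₂, gchoose_neg_formula (m₂+1) m₁]
      rw [show m₁+(m₂+1) = m₁+m₂+1 by omega, show m₂+(m₁+1) = m₁+m₂+1 by omega,
        show m₁+1+m₂ = m₁+m₂+1 by omega, show m₂+1+m₁ = m₁+m₂+1 by omega]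
      rw [Nat.factorial_succ (m₁), Nat.factorial_succ (m₂)]
      push_cast
      ring

lemma sum_Icc_int (n : ℕ) (f : ℤ → ℝ) :
    ∑ x ∈ Finset.Icc (0:ℤ) (n:ℤ), f x = ∑ i ∈ Finset.range (n+1), f i := by
  induction n with
  | zero => simp
  | succ m ih =>
    rw [show ((m+1:ℕ):ℤ) = (m:ℤ)+1 by push_cast; ring]
    have hins : Finset.Icc (0:ℤ) ((m:ℤ)+1) = insert ((m:ℤ)+1) (Finset.Icc 0 (m:ℤ)) := by
      ext x; simp only [Finset.mem_Icc, Finset.mem_insert]; omega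
    rw [hins, Finset.sum_insert (by simp only [Finset.mem_Icc]; omega), ih,
      Finset.sum_range_succ (fun i => f i) (m+1)]
    push_cast
    exact add_comm _ _

lemma reindex_sum (μ ν : ℤ) (h : μ ≤ ν) (g : ℤ → ℝ) :
    ∑ a ∈ Finset.Icc μ ν, g a = ∑ t ∈ Finset.range ((ν-μ).toNat+1), g (μ+t) := by
  have hmap : Finset.Icc μ ν = Finset.map (addLeftEmbedding μ) (Finset.Icc 0 (ν-μ)) := by
    rw [Finset.map_add_left_Icc]
    norm_num
  rw [hmap, Finset.sum_map]
  rw [show ν-μ = (((ν-μ).toNat : ℕ) : ℤ) by rw [Int.toNat_of_nonneg (by omega)], sum_Icc_int]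
  apply Finset.sum_congr rfl; intro t _
  simp [addLeftEmbedding_apply]

lemma alphac_eq_zero {h : ℝ} {J₁ J₂ : ℕ} {μ₁ μ₂ a₁ a₂ : ℤ}
    (hc : ¬(0 ≤ μ₁ ∧ μ₁ ≤ a₁ ∧ a₁ ≤ (J₁:ℤ) ∧ 0 ≤ μ₂ ∧ μ₂ ≤ a₂ ∧ a₂ ≤ (J₂:ℤ))) :
    alphac h J₁ J₂ μ₁ μ₂ a₁ a₂ = 0 := by
  unfold alphac; rw [if_neg hc]

lemma Dcoef_mul (J₁ J₂ : ℕ) (μ₁ μ₂ ν₁ ν₂ x₁ x₂ : ℤ) :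
    Dcoef J₁ J₂ μ₁ μ₂ x₁ x₂ * Dcoef J₁ J₂ ((J₁:ℤ)-ν₁) ((J₂:ℤ)-ν₂) ((J₁:ℤ)-x₁) ((J₂:ℤ)-x₂)
      = Dcoef J₁ J₂ μ₁ μ₂ ν₁ ν₂ := by
  unfold Dcoef
  rw [← Real.sqrt_mul (by positivity)]
  congr 1
  rw [show (J₁:ℤ)-((J₁:ℤ)-ν₁) = ν₁ by ring, show (J₂:ℤ)-((J₂:ℤ)-ν₂) = ν₂ by ring,
    show (J₁:ℤ)-((J₁:ℤ)-x₁) = x₁ by ring, show (J₂:ℤ)-((J₂:ℤ)-x₂) = x₂ by ring]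
  have hne : ∀ n : ℕ, (n.factorial:ℝ) ≠ 0 := fun n => Nat.cast_ne_zero.2 n.factorial_ne_zero
  field_simp

lemma bcoef_sub₁ (J₁ J₂ : ℕ) (μ₁ μ₂ : ℤ) (t₁ t₂ : ℕ) :
    bcoef J₁ J₂ μ₁ μ₂ (μ₁+(t₁:ℤ)) (μ₂+(t₂:ℤ)) - bcoef J₁ J₂ μ₁ μ₂ (μ₁+(t₁:ℤ)-1) (μ₂+(t₂:ℤ)-1)
      = dd (2*μ₁-J₁) (2*μ₂-J₂) t₁ t₂ := by
  unfold bcoef dd cc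
  rw [show μ₁+(μ₁+(t₁:ℤ))-J₁ = 2*μ₁-(J₁:ℤ)+t₁ by ring,
    show μ₂+(t₂:ℤ)-μ₂ = (t₂:ℤ) by ring,
    show μ₂+(μ₂+(t₂:ℤ))-J₂ = 2*μ₂-(J₂:ℤ)+t₂ by ring,
    show μ₁+(t₁:ℤ)-μ₁ = (t₁:ℤ) by ring,
    show μ₁+(μ₁+(t₁:ℤ)-1)-J₁ = 2*μ₁-(J₁:ℤ)+((t₁:ℤ)-1) by ring,
    show μ₂+(t₂:ℤ)-1-μ₂ = (t₂:ℤ)-1 by ring,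
    show μ₂+(μ₂+(t₂:ℤ)-1)-J₂ = 2*μ₂-(J₂:ℤ)+((t₂:ℤ)-1) by ring,
    show μ₁+(t₁:ℤ)-1-μ₁ = (t₁:ℤ)-1 by ring]

lemma bcoef_sub₂ (J₁ J₂ : ℕ) (μ₁ μ₂ ν₁ ν₂ : ℤ) (t₁ t₂ : ℕ) :
    bcoef J₁ J₂ ((J₁:ℤ)-ν₁) ((J₂:ℤ)-ν₂) ((J₁:ℤ)-(μ₁+(t₁:ℤ))) ((J₂:ℤ)-(μ₂+(t₂:ℤ)))
      - bcoef J₁ J₂ ((J₁:ℤ)-ν₁) ((J₂:ℤ)-ν₂) ((J₁:ℤ)-(μ₁+(t₁:ℤ))-1) ((J₂:ℤ)-(μ₂+(t₂:ℤ))-1)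
      = dd ((J₁:ℤ)-2*ν₁) ((J₂:ℤ)-2*ν₂) ((ν₁-μ₁)-t₁) ((ν₂-μ₂)-t₂) := by
  unfold bcoef dd cc
  rw [show (J₁:ℤ)-ν₁+((J₁:ℤ)-(μ₁+(t₁:ℤ)))-J₁ = (J₁:ℤ)-2*ν₁+((ν₁-μ₁)-t₁) by ring,
    show (J₂:ℤ)-(μ₂+(t₂:ℤ))-((J₂:ℤ)-ν₂) = (ν₂-μ₂)-t₂ by ring,
    show (J₂:ℤ)-ν₂+((J₂:ℤ)-(μ₂+(t₂:ℤ)))-J₂ = (J₂:ℤ)-2*ν₂+((ν₂-μ₂)-t₂) by ring,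
    show (J₁:ℤ)-(μ₁+(t₁:ℤ))-((J₁:ℤ)-ν₁) = (ν₁-μ₁)-t₁ by ring,
    show (J₁:ℤ)-ν₁+((J₁:ℤ)-(μ₁+(t₁:ℤ))-1)-J₁ = (J₁:ℤ)-2*ν₁+((ν₁-μ₁)-t₁-1) by ring,
    show (J₂:ℤ)-(μ₂+(t₂:ℤ))-1-((J₂:ℤ)-ν₂) = (ν₂-μ₂)-t₂-1 by ring,
    show (J₂:ℤ)-ν₂+((J₂:ℤ)-(μ₂+(t₂:ℤ))-1)-J₂ = (J₂:ℤ)-2*ν₂+((ν₂-μ₂)-t₂-1) by ring,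
    show (J₁:ℤ)-(μ₁+(t₁:ℤ))-1-((J₁:ℤ)-ν₁) = (ν₁-μ₁)-t₁-1 by ring]

lemma term_eq (h : ℝ) (J₁ J₂ : ℕ) (μ₁ μ₂ ν₁ ν₂ : ℤ) (t₁ t₂ : ℕ)
    (hμ₁ : 0 ≤ μ₁) (hμ₂ : 0 ≤ μ₂) (hν₁' : ν₁ ≤ (J₁:ℤ)) (hν₂' : ν₂ ≤ (J₂:ℤ))
    (ht₁ : μ₁ + (t₁:ℤ) ≤ ν₁) (ht₂ : μ₂ + (t₂:ℤ) ≤ ν₂) :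
    alphac h J₁ J₂ μ₁ μ₂ (μ₁+(t₁:ℤ)) (μ₂+(t₂:ℤ)) *
      alphac h J₁ J₂ ((J₁:ℤ)-ν₁) ((J₂:ℤ)-ν₂) ((J₁:ℤ)-(μ₁+(t₁:ℤ))) ((J₂:ℤ)-(μ₂+(t₂:ℤ)))
    = ((-1:ℝ))^(ν₂-μ₂).toNat * (h/2)^((ν₁-μ₁).toNat+(ν₂-μ₂).toNat)
        * Dcoef J₁ J₂ μ₁ μ₂ ν₁ ν₂
        * (dd (2*μ₁-J₁) (2*μ₂-J₂) t₁ t₂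
           * dd ((J₁:ℤ)-2*ν₁) ((J₂:ℤ)-2*ν₂) ((ν₁-μ₁)-t₁) ((ν₂-μ₂)-t₂)) := by
  unfold alphac
  rw [if_pos ⟨hμ₁, by omega, by omega, hμ₂, by omega, by omega⟩,
    if_pos ⟨by omega, by omega, by omega, by omega, by omega, by omega⟩]
  rw [show (μ₂+(t₂:ℤ)-μ₂).toNat = t₂ by omega,
    show (μ₁+(t₁:ℤ)+(μ₂+(t₂:ℤ))-μ₁-μ₂).toNat = t₁+t₂ by omega,
    show ((J₂:ℤ)-(μ₂+(t₂:ℤ))-((J₂:ℤ)-ν₂)).toNat = (ν₂-μ₂).toNat - t₂ by omega,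
    show ((J₁:ℤ)-(μ₁+(t₁:ℤ))+((J₂:ℤ)-(μ₂+(t₂:ℤ)))-((J₁:ℤ)-ν₁)-((J₂:ℤ)-ν₂)).toNat
      = ((ν₁-μ₁).toNat-t₁)+((ν₂-μ₂).toNat-t₂) by omega]
  rw [bcoef_sub₁, bcoef_sub₂]
  have hs : ((-1:ℝ))^t₂ * (-1:ℝ)^((ν₂-μ₂).toNat-t₂) = (-1:ℝ)^(ν₂-μ₂).toNat := by
    rw [← pow_add]; congr 1; omega
  have hh : (h/2)^(t₁+t₂) * (h/2)^(((ν₁-μ₁).toNat-t₁)+((ν₂-μ₂).toNat-t₂))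
      = (h/2)^((ν₁-μ₁).toNat+(ν₂-μ₂).toNat) := by
    rw [← pow_add]; congr 1; omega
  have hD := Dcoef_mul J₁ J₂ μ₁ μ₂ ν₁ ν₂ (μ₁+(t₁:ℤ)) (μ₂+(t₂:ℤ))
  calc (-1:ℝ)^t₂ * (h/2)^(t₁+t₂) * Dcoef J₁ J₂ μ₁ μ₂ (μ₁+(t₁:ℤ)) (μ₂+(t₂:ℤ))
        * dd (2*μ₁-J₁) (2*μ₂-J₂) t₁ t₂
        * ((-1:ℝ)^((ν₂-μ₂).toNat-t₂) * (h/2)^(((ν₁-μ₁).toNat-t₁)+((ν₂-μ₂).toNat-t₂))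
          * Dcoef J₁ J₂ ((J₁:ℤ)-ν₁) ((J₂:ℤ)-ν₂) ((J₁:ℤ)-(μ₁+(t₁:ℤ))) ((J₂:ℤ)-(μ₂+(t₂:ℤ)))
          * dd ((J₁:ℤ)-2*ν₁) ((J₂:ℤ)-2*ν₂) ((ν₁-μ₁)-t₁) ((ν₂-μ₂)-t₂))
      = ((-1:ℝ)^t₂ * (-1:ℝ)^((ν₂-μ₂).toNat-t₂))
        * ((h/2)^(t₁+t₂) * (h/2)^(((ν₁-μ₁).toNat-t₁)+((ν₂-μ₂).toNat-t₂)))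
        * (Dcoef J₁ J₂ μ₁ μ₂ (μ₁+(t₁:ℤ)) (μ₂+(t₂:ℤ))
          * Dcoef J₁ J₂ ((J₁:ℤ)-ν₁) ((J₂:ℤ)-ν₂) ((J₁:ℤ)-(μ₁+(t₁:ℤ))) ((J₂:ℤ)-(μ₂+(t₂:ℤ))))
        * (dd (2*μ₁-J₁) (2*μ₂-J₂) t₁ t₂
          * dd ((J₁:ℤ)-2*ν₁) ((J₂:ℤ)-2*ν₂) ((ν₁-μ₁)-t₁) ((ν₂-μ₂)-t₂)) := by ring
    _ = _ := by rw [hs, hh, hD]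

/-- Orthogonality of the `U_h(sl(2))` coefficients:
`Σ_{k₁,k₂} α_{k₁,k₂}^{m₁,m₂} α_{-k₁,-k₂}^{-n₁,-n₂} = δ_{m₁,n₁} δ_{m₂,n₂}`
(an index `-k` is encoded by `j + (-k) = J - a`). -/
theorem alphac_orthogonality (h : ℝ) (J₁ J₂ : ℕ) (μ₁ μ₂ ν₁ ν₂ : ℤ)
    (hμ₁ : 0 ≤ μ₁) (hμ₁' : μ₁ ≤ J₁) (hμ₂ : 0 ≤ μ₂) (hμ₂' : μ₂ ≤ J₂)
    (hν₁ : 0 ≤ ν₁) (hν₁' : ν₁ ≤ J₁) (hν₂ : 0 ≤ ν₂) (hν₂' : ν₂ ≤ J₂) :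
    ∑ a₁ ∈ Finset.Icc (0 : ℤ) J₁, ∑ a₂ ∈ Finset.Icc (0 : ℤ) J₂,
        alphac h J₁ J₂ μ₁ μ₂ a₁ a₂ *
          alphac h J₁ J₂ ((J₁ : ℤ) - ν₁) ((J₂ : ℤ) - ν₂) ((J₁ : ℤ) - a₁) ((J₂ : ℤ) - a₂)
      = if μ₁ = ν₁ ∧ μ₂ = ν₂ then 1 else 0 := by
  have vanish : ∀ a₁ a₂ : ℤ, (a₁ < μ₁ ∨ ν₁ < a₁ ∨ a₂ < μ₂ ∨ ν₂ < a₂) →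
      alphac h J₁ J₂ μ₁ μ₂ a₁ a₂ *
        alphac h J₁ J₂ ((J₁:ℤ)-ν₁) ((J₂:ℤ)-ν₂) ((J₁:ℤ)-a₁) ((J₂:ℤ)-a₂) = 0 := by
    intro a₁ a₂ hv
    by_cases c₁ : 0 ≤ μ₁ ∧ μ₁ ≤ a₁ ∧ a₁ ≤ (J₁:ℤ) ∧ 0 ≤ μ₂ ∧ μ₂ ≤ a₂ ∧ a₂ ≤ (J₂:ℤ)
    · by_cases c₂ : 0 ≤ (J₁:ℤ)-ν₁ ∧ (J₁:ℤ)-ν₁ ≤ (J₁:ℤ)-a₁ ∧ (J₁:ℤ)-a₁ ≤ (J₁:ℤ)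
          ∧ 0 ≤ (J₂:ℤ)-ν₂ ∧ (J₂:ℤ)-ν₂ ≤ (J₂:ℤ)-a₂ ∧ (J₂:ℤ)-a₂ ≤ (J₂:ℤ)
      · exfalso
        obtain ⟨-, c₁₂, -, -, c₁₅, -⟩ := c₁
        obtain ⟨-, c₂₂, -, -, c₂₅, -⟩ := c₂
        omega
      · rw [alphac_eq_zero c₂, mul_zero]
    · rw [alphac_eq_zero c₁, zero_mul]
  by_cases hcase : μ₁ ≤ ν₁ ∧ μ₂ ≤ ν₂
  · obtain ⟨h₁, h₂⟩ := hcase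
    have hn₁ : ((ν₁-μ₁).toNat : ℤ) = ν₁-μ₁ := Int.toNat_of_nonneg (by omega)
    have hn₂ : ((ν₂-μ₂).toNat : ℤ) = ν₂-μ₂ := Int.toNat_of_nonneg (by omega)
    have inner_eq : ∀ a₁ ∈ Finset.Icc (0:ℤ) (J₁:ℤ),
        (∑ a₂ ∈ Finset.Icc (0:ℤ) (J₂:ℤ), alphac h J₁ J₂ μ₁ μ₂ a₁ a₂ *
          alphac h J₁ J₂ ((J₁:ℤ)-ν₁) ((J₂:ℤ)-ν₂) ((J₁:ℤ)-a₁) ((J₂:ℤ)-a₂))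
        = ∑ a₂ ∈ Finset.Icc μ₂ ν₂, alphac h J₁ J₂ μ₁ μ₂ a₁ a₂ *
          alphac h J₁ J₂ ((J₁:ℤ)-ν₁) ((J₂:ℤ)-ν₂) ((J₁:ℤ)-a₁) ((J₂:ℤ)-a₂) := by
      intro a₁ _
      refine (Finset.sum_subset (Finset.Icc_subset_Icc hμ₂ hν₂') fun a₂ _ hout => ?_).symm
      rw [Finset.mem_Icc] at hout
      exact vanish _ _ (by omega)
    rw [Finset.sum_congr rfl inner_eq]
    rw [← Finset.sum_subset (Finset.Icc_subset_Icc hμ₁ hν₁') (fun a₁ _ hout => by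
      rw [Finset.mem_Icc] at hout
      exact Finset.sum_eq_zero fun a₂ _ => vanish _ _ (by omega))]
    rw [reindex_sum μ₁ ν₁ h₁]
    rw [Finset.sum_congr rfl (fun t₁ _ => reindex_sum μ₂ ν₂ h₂ _)]
    have point : ∀ t₁ ∈ Finset.range ((ν₁-μ₁).toNat+1), ∀ t₂ ∈ Finset.range ((ν₂-μ₂).toNat+1),
        alphac h J₁ J₂ μ₁ μ₂ (μ₁+(t₁:ℤ)) (μ₂+(t₂:ℤ)) *
          alphac h J₁ J₂ ((J₁:ℤ)-ν₁) ((J₂:ℤ)-ν₂) ((J₁:ℤ)-(μ₁+(t₁:ℤ))) ((J₂:ℤ)-(μ₂+(t₂:ℤ)))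
        = ((-1:ℝ))^(ν₂-μ₂).toNat * (h/2)^((ν₁-μ₁).toNat+(ν₂-μ₂).toNat)
            * Dcoef J₁ J₂ μ₁ μ₂ ν₁ ν₂
            * (dd (2*μ₁-J₁) (2*μ₂-J₂) t₁ t₂
               * dd ((J₁:ℤ)-2*ν₁) ((J₂:ℤ)-2*ν₂) ((ν₁-μ₁)-t₁) ((ν₂-μ₂)-t₂)) := by
      intro t₁ ht₁ t₂ ht₂
      rw [Finset.mem_range] at ht₁ ht₂
      exact term_eq h J₁ J₂ μ₁ μ₂ ν₁ ν₂ t₁ t₂ hμ₁ hμ₂ hν₁' hν₂' (by omega) (by omega)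
    rw [Finset.sum_congr rfl (fun t₁ ht₁ => Finset.sum_congr rfl (point t₁ ht₁))]
    have pull : (∑ t₁ ∈ Finset.range ((ν₁-μ₁).toNat+1), ∑ t₂ ∈ Finset.range ((ν₂-μ₂).toNat+1),
        ((-1:ℝ))^(ν₂-μ₂).toNat * (h/2)^((ν₁-μ₁).toNat+(ν₂-μ₂).toNat)
          * Dcoef J₁ J₂ μ₁ μ₂ ν₁ ν₂
          * (dd (2*μ₁-J₁) (2*μ₂-J₂) t₁ t₂
             * dd ((J₁:ℤ)-2*ν₁) ((J₂:ℤ)-2*ν₂) ((ν₁-μ₁)-t₁) ((ν₂-μ₂)-t₂)))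
        = ((-1:ℝ))^(ν₂-μ₂).toNat * (h/2)^((ν₁-μ₁).toNat+(ν₂-μ₂).toNat)
          * Dcoef J₁ J₂ μ₁ μ₂ ν₁ ν₂
          * Sd (2*μ₁-J₁) (2*μ₂-J₂) ((J₁:ℤ)-2*ν₁) ((J₂:ℤ)-2*ν₂)
              ((ν₁-μ₁).toNat) ((ν₂-μ₂).toNat) := by
      rw [Sd, Finset.mul_sum]
      refine Finset.sum_congr rfl fun t₁ _ => ?_
      rw [Finset.mul_sum]
      refine Finset.sum_congr rfl fun t₂ _ => ?_
      rw [show ((((ν₁-μ₁).toNat:ℕ)):ℤ) - (t₁:ℤ) = (ν₁-μ₁)-t₁ by omega,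
        show ((((ν₂-μ₂).toNat:ℕ)):ℤ) - (t₂:ℤ) = (ν₂-μ₂)-t₂ by omega]
    rw [pull, Sd_shift, show ((J₁:ℤ)-2*ν₁) + (2*μ₁-(J₁:ℤ)) = -2*((ν₁-μ₁).toNat:ℤ) by omega,
      show ((J₂:ℤ)-2*ν₂) + (2*μ₂-(J₂:ℤ)) = -2*((ν₂-μ₂).toNat:ℤ) by omega,
      Sd_eval, dd_final]
    by_cases hz : (ν₁-μ₁).toNat = 0 ∧ (ν₂-μ₂).toNat = 0
    · obtain ⟨hz₁, hz₂⟩ := hz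
      have hzz₁ : μ₁ = ν₁ := by omega
      have hzz₂ : μ₂ = ν₂ := by omega
      rw [if_pos ⟨hz₁, hz₂⟩, if_pos ⟨hzz₁, hzz₂⟩, mul_one, hz₁, hz₂]
      subst hzz₁; subst hzz₂
      rw [Dcoef]
      rw [show ((((J₁:ℤ)-μ₁).toNat.factorial * μ₁.toNat.factorial *
          ((J₂:ℤ)-μ₂).toNat.factorial * μ₂.toNat.factorial : ℝ)) =
        ((μ₁.toNat.factorial * ((J₁:ℤ)-μ₁).toNat.factorial *
          μ₂.toNat.factorial * ((J₂:ℤ)-μ₂).toNat.factorial : ℝ)) by ring]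
      rw [div_self (by positivity), Real.sqrt_one]
      norm_num
    · rw [if_neg hz, mul_zero, if_neg (fun ⟨e₁, e₂⟩ => hz ⟨by omega, by omega⟩)]
  · rw [if_neg (fun ⟨e₁, e₂⟩ => hcase ⟨le_of_eq e₁, le_of_eq e₂⟩)]
    exact Finset.sum_eq_zero fun a₁ _ => Finset.sum_eq_zero fun a₂ _ => by
      by_cases c₁ : μ₁ ≤ a₁ ∧ a₁ ≤ ν₁
      · by_cases c₂ : μ₂ ≤ a₂ ∧ a₂ ≤ ν₂
        · exact absurd ⟨by omega, by omega⟩ hcase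
        · exact vanish _ _ (by omega)
      · exact vanish _ _ (by omega)
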